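/- Let 0 ≤ a < r and define f : ℂ → ℂ on the unit disk by f(z) = r·((z − a/r)/(1 − (a/r)z)) + a. Then f maps the open unit disk conformally onto ball(a, r) ⊆ ℂ, f(0) = 0, and |f'(z)| ≤ r(r + a)/(r − a) for all z in the open unit disk, with the value r(r + a)/(r − a) attained as |f'(z)| → that value as z → 1 (indeed f extends holomorphically past z = 1 and |f'(1)| = r(r + a)/(r − a)). -/

import Mathlib

open Metric

private lemma normSq_key (c : ℝ) (z : ℂ) :
    Complex.normSq (1 - (c:ℂ) * z) - Complex.normSq (z - (c:ℂ)) =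
      (1 - c^2) * (1 - Complex.normSq z) := by
  simp only [Complex.normSq_apply, Complex.sub_re, Complex.sub_im, Complex.mul_re,
    Complex.mul_im, Complex.one_re, Complex.one_im, Complex.ofReal_re, Complex.ofReal_im]
  ring

private lemma den_ne (c : ℝ) (hc0 : 0 ≤ c) (hc1 : c < 1) {z : ℂ} (hz : ‖z‖ ≤ 1) :
    1 - (c:ℂ) * z ≠ 0 := by
  intro h
  have h2 : (1:ℂ) = (c:ℂ) * z := by linear_combination h
  have h3 := congrArg (‖·‖) h2
  simp [norm_mul, Complex.norm_real, abs_of_nonneg hc0] at h3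
  nlinarith [norm_nonneg z]

private lemma abs_lt_one (c : ℝ) (hc0 : 0 ≤ c) (hc1 : c < 1) {z : ℂ}
    (hz : ‖z‖ < 1) :
    ‖(z - (c:ℂ)) / (1 - (c:ℂ) * z)‖ < 1 := by
  have hden := den_ne c hc0 hc1 hz.le
  have hpos : 0 < ‖1 - (c:ℂ) * z‖ := norm_pos_iff.mpr hden
  rw [norm_div, div_lt_one hpos]
  have key := normSq_key c z
  have h1 : Complex.normSq z < 1 := by
    have := Complex.sq_norm z
    nlinarith [norm_nonneg z]
  have h2 : Complex.normSq (z - (c:ℂ)) < Complex.normSq (1 - (c:ℂ) * z) := by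
    have hcc : (0:ℝ) < 1 - c^2 := by nlinarith
    nlinarith [mul_pos hcc (by linarith : (0:ℝ) < 1 - Complex.normSq z)]
  have e1 := Complex.sq_norm (z - (c:ℂ))
  have e2 := Complex.sq_norm (1 - (c:ℂ) * z)
  nlinarith [norm_nonneg (z - (c:ℂ)), norm_nonneg (1 - (c:ℂ) * z)]

private lemma mobius_comp (c : ℝ) (u : ℂ) (h1 : 1 + (c:ℂ) * u ≠ 0)
    (_hc2 : (1:ℂ) - (c:ℂ)^2 ≠ 0)
    (h4 : 1 - (c:ℂ) * ((u + (c:ℂ)) / (1 + (c:ℂ) * u)) ≠ 0) :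
    ((u + (c:ℂ)) / (1 + (c:ℂ) * u) - (c:ℂ)) / (1 - (c:ℂ) * ((u + (c:ℂ)) / (1 + (c:ℂ) * u))) = u := by
  have h1' : 1 + u * (c:ℂ) ≠ 0 := by rwa [mul_comm]
  rw [div_eq_iff h4]
  field_simp
  ring

theorem stmt9 (a r : ℝ) (ha : 0 ≤ a) (har : a < r)
    (f : ℂ → ℂ)
    (hf : f = fun z => (r : ℂ) * ((z - (a / r : ℝ)) / (1 - (a / r : ℝ) * z)) + (a : ℂ)) :
    Set.BijOn f (ball (0 : ℂ) 1) (ball (a : ℂ) r) ∧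
      f 0 = 0 ∧
      DifferentiableOn ℂ f (ball (0 : ℂ) 1) ∧
      (∀ z ∈ ball (0 : ℂ) 1, ‖deriv f z‖ ≤ r * (r + a) / (r - a)) ∧
      DifferentiableAt ℂ f 1 ∧
      ‖deriv f 1‖ = r * (r + a) / (r - a) := by
  have hr : (0:ℝ) < r := lt_of_le_of_lt ha har
  set c : ℝ := a / r with hcdef
  have hc0 : 0 ≤ c := div_nonneg ha hr.le
  have hc1 : c < 1 := (div_lt_one hr).2 har
  have hra : r - a ≠ 0 := by linarith
  have hrne : (r:ℂ) ≠ 0 := by exact_mod_cast hr.ne'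
  have hrc : ((c:ℝ):ℂ) * r = a := by
    rw [hcdef]; push_cast; field_simp
  have hc2 : (1:ℂ) - (c:ℂ)^2 ≠ 0 := by
    intro h0
    have h1 : ((1:ℝ) - c^2 : ℂ) = 0 := by push_cast; linear_combination h0
    have h2 : (1:ℝ) - c^2 = 0 := by exact_mod_cast h1
    nlinarith
  have hmem : ∀ z : ℂ, z ∈ ball (0:ℂ) 1 ↔ ‖z‖ < 1 := by
    intro z; simp [Complex.dist_eq]
  have hmem' : ∀ w : ℂ, w ∈ ball (a:ℂ) r ↔ ‖w - a‖ < r := by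
    intro w; simp [Complex.dist_eq]
  have hderiv : ∀ z : ℂ, 1 - (c:ℂ) * z ≠ 0 →
      HasDerivAt f ((r:ℂ) * (1 - (c:ℂ)^2) / (1 - (c:ℂ) * z)^2) z := by
    intro z hden
    have h1 : HasDerivAt (fun w : ℂ => w - (c:ℂ)) 1 z := (hasDerivAt_id z).sub_const _
    have h2 : HasDerivAt (fun w : ℂ => 1 - (c:ℂ) * w) (-(c:ℂ)) z := by
      simpa using ((hasDerivAt_id z).const_mul (c:ℂ)).const_sub 1
    have h3 := h1.div h2 hden
    have h4 := (h3.const_mul (r:ℂ)).add_const (a:ℂ)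
    have heq : (r:ℂ) * (1 - (c:ℂ)^2) / (1 - (c:ℂ) * z)^2
        = (r:ℂ) * ((1 * (1 - (c:ℂ) * z) - (z - (c:ℂ)) * -(c:ℂ)) / (1 - (c:ℂ) * z)^2) := by
      rw [mul_div_assoc]
      congr 2
      ring
    rw [hf, heq]
    exact h4
  constructor
  · -- BijOn
    have hmapsTo : ∀ z ∈ ball (0:ℂ) 1, f z ∈ ball (a:ℂ) r := by
      intro z hz
      rw [hmem] at hz
      rw [hmem', hf]
      simp only [add_sub_cancel_right]
      rw [norm_mul, Complex.norm_of_nonneg hr.le]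
      have := abs_lt_one c hc0 hc1 hz
      nlinarith
    refine ⟨hmapsTo, ?_, ?_⟩
    · -- InjOn
      intro z hz w hw hzw
      rw [hmem] at hz hw
      simp only [hf] at hzw
      have hdz := den_ne c hc0 hc1 hz.le
      have hdw := den_ne c hc0 hc1 hw.le
      have h0 : (z - (c:ℂ)) / (1 - (c:ℂ) * z) = (w - (c:ℂ)) / (1 - (c:ℂ) * w) :=
        mul_left_cancel₀ hrne (add_right_cancel hzw)
      rw [div_eq_div_iff hdz hdw] at h0
      have h5 : ((1:ℂ) - (c:ℂ)^2) * (z - w) = 0 := by linear_combination h0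
      have h6 := (mul_eq_zero.1 h5).resolve_left hc2
      exact sub_eq_zero.1 h6
    · -- SurjOn
      intro w hw
      rw [hmem'] at hw
      set u : ℂ := (w - a) / r with hu
      have hu1 : ‖u‖ < 1 := by
        rw [hu, norm_div, Complex.norm_of_nonneg hr.le, div_lt_one hr]
        exact hw
      have hdenu : 1 + (c:ℂ) * u ≠ 0 := by
        have h := den_ne c hc0 hc1 (z := -u) (by simpa using hu1.le)
        intro h0; apply h; linear_combination h0
      have hzabs : ‖(u + (c:ℂ)) / (1 + (c:ℂ) * u)‖ < 1 := by
        have h := abs_lt_one c hc0 hc1 (z := -u) (by simpa using hu1)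
        have heq : (-u - (c:ℂ)) / (1 - (c:ℂ) * -u) = -((u + (c:ℂ)) / (1 + (c:ℂ) * u)) := by
          rw [show -u - (c:ℂ) = -(u + (c:ℂ)) by ring,
            show 1 - (c:ℂ) * -u = 1 + (c:ℂ) * u by ring, neg_div]
        rw [heq, norm_neg] at h
        exact h
      refine ⟨(u + (c:ℂ)) / (1 + (c:ℂ) * u), (hmem _).2 hzabs, ?_⟩
      have hden2 := den_ne c hc0 hc1 hzabs.le
      have hw' : w = (r:ℂ) * u + a := by
        rw [hu, mul_comm, div_mul_cancel₀ _ hrne]; ring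
      simp only [hf]
      rw [mobius_comp c u hdenu hc2 hden2, hw']
  refine ⟨?_, ?_, ?_, ?_, ?_⟩
  · simp only [hf]
    have h0 : ((0:ℂ) - (c:ℝ)) / (1 - (c:ℝ) * 0) = -(c:ℝ) := by simp
    rw [h0]
    linear_combination -hrc
  · intro z hz
    rw [hmem] at hz
    exact ((hderiv z (den_ne c hc0 hc1 hz.le)).differentiableAt).differentiableWithinAt
  · intro z hz
    rw [hmem] at hz
    rw [(hderiv z (den_ne c hc0 hc1 hz.le)).deriv]
    rw [norm_div, norm_mul, norm_pow, Complex.norm_of_nonneg hr.le]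
    have habs1 : ‖(1 - (c:ℂ)^2)‖ = 1 - c^2 := by
      rw [show (1 - (c:ℂ)^2) = (((1 - c^2 : ℝ)):ℂ) by push_cast; ring, Complex.norm_real, Real.norm_eq_abs]
      exact abs_of_nonneg (by nlinarith)
    rw [habs1]
    have hlb : 1 - c ≤ ‖1 - (c:ℂ) * z‖ := by
      have h1 : ‖(c:ℂ) * z‖ ≤ c := by
        rw [norm_mul, Complex.norm_of_nonneg hc0]
        nlinarith [hz.le, norm_nonneg z]
      have h2 := norm_sub_norm_le (1:ℂ) ((c:ℂ) * z)
      simp only [norm_one] at h2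
      linarith
    have hrhs : r * (r + a) / (r - a) = r * (1 - c^2) / (1 - c)^2 := by
      rw [hcdef]; field_simp; ring
    rw [hrhs]
    have hcc : (0:ℝ) < 1 - c^2 := by nlinarith
    gcongr
    all_goals first
      | exact (mul_pos hr hcc).le
      | linarith
  · exact (hderiv 1 (by
      intro h0
      have h1 : ((1:ℝ) - c : ℂ) = 0 := by push_cast; linear_combination h0
      have h2 : (1:ℝ) - c = 0 := by exact_mod_cast h1
      linarith)).differentiableAt
  · rw [(hderiv 1 (by
      intro h0
      have h1 : ((1:ℝ) - c : ℂ) = 0 := by push_cast; linear_combination h0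
      have h2 : (1:ℝ) - c = 0 := by exact_mod_cast h1
      linarith)).deriv]
    have heq : (r:ℂ) * (1 - (c:ℂ)^2) / (1 - (c:ℂ) * 1)^2 = (((r * (1 - c^2) / (1 - c)^2 : ℝ)):ℂ) := by
      push_cast
      ring
    have hcc : (0:ℝ) < 1 - c^2 := by nlinarith
    rw [heq, Complex.norm_real, Real.norm_eq_abs,
      abs_of_nonneg (div_nonneg (mul_pos hr hcc).le (sq_nonneg _))]
    rw [hcdef]; field_simp; ring
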